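/- For T a closed densely-defined operator from H to K, the operator T(I + T*T)^{-1/2} extends to a bounded operator defined on all of H with norm at most 1. -/

import Mathlib

open scoped InnerProductSpace ComplexConjugate
open Topology

set_option maxHeartbeats 1000000

/-- Let `T : H → K` be closed and densely defined, let `B` be the (positive,
bounded) inverse of `I + T*T` and let `R` be its positive square root, so that
`R = (I + T*T)^{-1/2}`.  Then `T ∘ R = T(I + T*T)^{-1/2}` extends to a bounded operator
`C` defined on all of `H` with `‖C‖ ≤ 1`. -/
theorem comp_inv_sqrt_one_add_adjoint_comp_self_bounded
    {H K : Type*} [NormedAddCommGroup H] [InnerProductSpace ℂ H] [CompleteSpace H]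
    [NormedAddCommGroup K] [InnerProductSpace ℂ K] [CompleteSpace K]
    (T : H →ₗ.[ℂ] K) (hdense : Dense (T.domain : Set H)) (hclosed : T.IsClosed)
    (B R : H →L[ℂ] H) (hB : B.IsPositive)
    (hBinv₁ : ∀ p : {p : T.domain // T p ∈ T.adjoint.domain},
      B ((p.1 : H) + T.adjoint ⟨T p.1, p.2⟩) = (p.1 : H))
    (hBinv₂ : ∀ y : H, ∃ p : {p : T.domain // T p ∈ T.adjoint.domain},
      (p.1 : H) + T.adjoint ⟨T p.1, p.2⟩ = y)
    (hR : R.IsPositive) (hRsq : R * R = B) :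
    ∃ C : H →L[ℂ] K, ‖C‖ ≤ 1 ∧
      ∀ x : H, ∀ hx : R x ∈ T.domain, C x = T ⟨R x, hx⟩ := by
  classical
  -- B z is in the domain of T
  have hRR : ∀ z : H, R (R z) = B z := fun z => by
    rw [← hRsq]; rfl
  have hBz : ∀ z : H, ∃ p : {p : T.domain // T p ∈ T.adjoint.domain},
      (p.1 : H) = B z ∧ (p.1 : H) + T.adjoint ⟨T p.1, p.2⟩ = z := by
    intro z
    obtain ⟨p, hp⟩ := hBinv₂ z
    exact ⟨p, by rw [← hp, hBinv₁], hp⟩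
  have hBmem : ∀ z : H, B z ∈ T.domain := fun z => by
    obtain ⟨p, hp1, _⟩ := hBz z
    rw [← hp1]; exact p.1.2
  -- the (everywhere-defined) map `z ↦ T (B z)`
  set φ : H →ₗ[ℂ] K :=
    { toFun := fun z => T ⟨B z, hBmem z⟩
      map_add' := by
        intro z w
        show T ⟨B (z + w), hBmem (z + w)⟩ = T ⟨B z, hBmem z⟩ + T ⟨B w, hBmem w⟩
        have : (⟨B (z + w), hBmem (z + w)⟩ : T.domain)
            = ⟨B z, hBmem z⟩ + ⟨B w, hBmem w⟩ := by
          apply Subtype.ext; simp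
        rw [this, T.map_add]
      map_smul' := by
        intro c z
        show T ⟨B (c • z), hBmem (c • z)⟩ = c • T ⟨B z, hBmem z⟩
        have : (⟨B (c • z), hBmem (c • z)⟩ : T.domain)
            = c • (⟨B z, hBmem z⟩ : T.domain) := by
          apply Subtype.ext; simp
        rw [this, T.map_smul] } with hφdef
  have hφapp : ∀ (z : H) (h : B z ∈ T.domain), φ z = T ⟨B z, h⟩ := fun z h => rfl
  -- the key norm estimate
  have hφ : ∀ z : H, ‖φ z‖ ≤ ‖R z‖ := by
    intro z
    obtain ⟨p, hp1, hp2⟩ := hBz z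
    have hval : φ z = T p.1 := by
      rw [hφapp z (hBmem z)]
      congr 1
      exact Subtype.ext hp1.symm
    have hadj := (T.adjoint_isFormalAdjoint hdense) ⟨T p.1, p.2⟩ p.1
    -- ⟪T† (T p), p⟫ = ⟪T p, T p⟫
    have hTT : T.adjoint ⟨T p.1, p.2⟩ = z - (p.1 : H) := by
      rw [← hp2]; abel
    have h1 : ‖T p.1‖ ^ 2 = RCLike.re (⟪z - (p.1 : H), (p.1 : H)⟫_ℂ) := by
      rw [← hTT, hadj]
      exact (inner_self_eq_norm_sq _).symm
    have hsym : ∀ a b : H, ⟪R a, b⟫_ℂ = ⟪a, R b⟫_ℂ := fun a b => hR.1 a b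
    have h2 : RCLike.re (⟪z, B z⟫_ℂ) = ‖R z‖ ^ 2 := by
      rw [← hRR, ← hsym, inner_self_eq_norm_sq]
    have h3 : ‖T p.1‖ ^ 2 ≤ ‖R z‖ ^ 2 := by
      rw [h1, inner_sub_left, map_sub, ← hp1] at *
      rw [← h2, ← hp1]
      have : (0:ℝ) ≤ RCLike.re (⟪(p.1 : H), (p.1 : H)⟫_ℂ) := inner_self_nonneg
      linarith
    rw [hval] at *
    have := abs_le_abs (sq_le_sq' (by nlinarith [norm_nonneg (T p.1), norm_nonneg (R z)]) h3)
    nlinarith [norm_nonneg (T p.1), norm_nonneg (R z), h3]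
  -- well-definedness of `T ∘ B` as a function of `R z`
  have hsym : ∀ a b : H, ⟪R a, b⟫_ℂ = ⟪a, R b⟫_ℂ := fun a b => hR.1 a b
  have hwd : ∀ z w : H, R z = R w → φ z = φ w := by
    intro z w h
    have h1 : ‖φ z - φ w‖ ≤ ‖R (z - w)‖ := by rw [← map_sub]; exact hφ _
    rw [map_sub, h, sub_self, norm_zero] at h1
    exact sub_eq_zero.mp (norm_le_zero_iff.mp h1)
  set N : Submodule ℂ H := LinearMap.range (R : H →ₗ[ℂ] H) with hN
  set M : Submodule ℂ H := N.topologicalClosure with hM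
  have hsec : ∀ y : N, ∃ z : H, R z = (y : H) := fun y => y.2
  set g : N →ₗ[ℂ] K :=
    { toFun := fun y => φ (hsec y).choose
      map_add' := by
        intro y w
        have h1 : R ((hsec (y + w)).choose) = R ((hsec y).choose + (hsec w).choose) := by
          rw [map_add, (hsec y).choose_spec, (hsec w).choose_spec, (hsec (y + w)).choose_spec]
          rfl
        show φ _ = φ _ + φ _
        rw [hwd _ _ h1, map_add]
      map_smul' := by
        intro c y
        have h1 : R ((hsec (c • y)).choose) = R (c • (hsec y).choose) := by
          rw [map_smul, (hsec y).choose_spec, (hsec (c • y)).choose_spec]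
          rfl
        show φ _ = c • φ _
        rw [hwd _ _ h1, map_smul] } with hg
  have hgapp : ∀ (y : N) (z : H), R z = (y : H) → g y = φ z := by
    intro y z h
    exact hwd _ _ (by rw [(hsec y).choose_spec, h])
  have hgbound : ∀ y : N, ‖g y‖ ≤ ‖y‖ := by
    intro y
    calc ‖g y‖ ≤ ‖R ((hsec y).choose)‖ := hφ _
    _ = ‖y‖ := by rw [(hsec y).choose_spec]; exact Submodule.norm_coe y
  set gL : N →L[ℂ] K := g.mkContinuous 1 (fun y => by rw [one_mul]; exact hgbound y) with hgL
  have hgLapp : ∀ y : N, gL y = g y := fun y => rfl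
  have hgLnorm : ‖gL‖ ≤ 1 := g.mkContinuous_norm_le zero_le_one _
  -- the inclusion of `N` into its closure `M`
  set e : N →L[ℂ] M :=
    LinearMap.mkContinuous (Submodule.inclusion N.le_topologicalClosure) 1
      (fun y => by rw [one_mul]; rfl) with he
  have h_dense : DenseRange e := by
    refine IsInducing.subtypeVal.dense_iff.2 fun x => ?_
    have hx : (x : H) ∈ closure (N : Set H) := by
      rw [← Submodule.topologicalClosure_coe]; exact x.2
    convert hx using 2
    refine Set.ext fun y => ⟨?_, ?_⟩
    · rintro ⟨_, ⟨z, rfl⟩, rfl⟩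
      exact z.2
    · intro hy
      exact ⟨e ⟨y, hy⟩, ⟨⟨y, hy⟩, rfl⟩, rfl⟩
  have h_e : ∀ y : N, ‖y‖ ≤ (1 : NNReal) * ‖e y‖ := fun y => by
    rw [NNReal.coe_one, one_mul]; rfl
  set E : M →L[ℂ] K :=
    gL.extend e
    with hE
  have hEnorm : ‖E‖ ≤ 1 := by
    have := ContinuousLinearMap.opNorm_extend_le gL h_dense h_e
    rw [NNReal.coe_one, one_mul] at this
    exact this.trans hgLnorm
  haveI : CompleteSpace M := N.isClosed_topologicalClosure.completeSpace_coe
  set C : H →L[ℂ] K := E.comp M.orthogonalProjectionOnto with hC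
  refine ⟨C, ?_, ?_⟩
  · calc ‖C‖ ≤ ‖E‖ * ‖(M.orthogonalProjectionOnto : H →L[ℂ] M)‖ :=
        ContinuousLinearMap.opNorm_comp_le _ _
    _ ≤ 1 * 1 := mul_le_mul hEnorm (Submodule.orthogonalProjectionOnto_norm_le M)
        (ContinuousLinearMap.opNorm_nonneg _) zero_le_one
    _ = 1 := one_mul 1
  · -- the key graph property
    have key : ∀ m : M, ((R (m : H), E m) ∈ T.graph) := by
      have hclosedset : IsClosed {m : M | (R (m : H), E m) ∈ T.graph} :=
        hclosed.preimage ((R.continuous.comp continuous_subtype_val).prodMk E.continuous)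
      have hsub : Set.range e ⊆ {m : M | (R (m : H), E m) ∈ T.graph} := by
        rintro _ ⟨y, rfl⟩
        show (R ((e y : H)), E (e y)) ∈ T.graph
        have h1 : E (e y) = g y := by
          rw [hE, ContinuousLinearMap.extend_eq (h_dense := h_dense)
            (h_e := (ContinuousLinearMap.isUniformEmbedding_of_bound e h_e).isUniformInducing)]; exact hgLapp y
        have h2 : (e y : H) = (y : H) := rfl
        have h5 : R ((y : H)) = B ((hsec y).choose) := by
          have h := hRR ((hsec y).choose)
          rwa [(hsec y).choose_spec] at h
        have h4 : g y = T ⟨B ((hsec y).choose), hBmem _⟩ := rfl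
        rw [h1, h2, h4, h5]
        exact T.mem_graph ⟨B ((hsec y).choose), hBmem _⟩
      intro m
      exact hclosedset.closure_subset_iff.mpr hsub (h_dense m)
    intro x hx
    set m : M := M.orthogonalProjectionOnto x with hm
    have hRxm : R x = R ((m : H)) := by
      have hz : R (x - (m : H)) = 0 := by
        apply ext_inner_right ℂ
        intro v
        rw [inner_zero_left, hsym]
        exact M.starProjection_inner_eq_zero x (R v)
          (N.le_topologicalClosure ⟨v, rfl⟩)
      have hz2 : R x - R ((m : H)) = 0 := by rw [← map_sub]; exact hz
      exact sub_eq_zero.mp hz2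
    have hCx : C x = E m := rfl
    have hmem : (R x, C x) ∈ T.graph := by
      rw [hCx, hRxm]
      exact key m
    rw [T.mem_graph_iff] at hmem
    obtain ⟨y, hy1, hy2⟩ := hmem
    have hy2' : (T y : K) = C x := hy2
    have hy1' : (y : H) = R x := hy1
    rw [← hy2']
    congr 1
    exact Subtype.ext hy1'
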